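/- arXiv:2003.05948 — 2 statements merged into one kernel-verified Lean document; each statement's English description precedes it below -/
import Mathlib

section
/- With the setup of the previous statement (H = Σ_{j=1}^m ε_{q_j} n_{q_j} + H̃, ε_{q_j} ≠ 0, h_j = (1 − sgn(ε_{q_j}))/2), the trial state ψ_t = (c†_{q_1})^{h_1} ⋯ (c†_{q_m})^{h_m} ψ̃, with ψ̃ a ground state of H̃ in its optimal M*-particle sector, is an eigenstate-candidate with particle number M** = M* + Σ_j h_j and energy ⟨ψ_t| H |ψ_t⟩ = Σ_j h_j ε_{q_j} + Ẽ_0(M*). Consequently E_0(M**) = Σ_j h_j ε_{q_j} + Ẽ_0(M*), and E_0(N) ≥ E_0(M**) for all N, i.e., the global ground state energy of H over all number sectors is attained in the sector with M** particles. -/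
open Finset ComplexConjugate

/-- Sign factor for fermionic operators in the occupation-number basis (subsets of modes). -/
noncomputable def fsign {K : Type*} [LinearOrder K] (k : K) (S : Finset K) : ℂ :=
  (-1 : ℂ) ^ (S.filter (fun j => j < k)).card

/-- Annihilation operator `c_k` on the fermionic Fock space over `ℂ^K`, realized as
functions `Finset K → ℂ` on the occupation-number basis. -/
noncomputable def annOp {K : Type*} [LinearOrder K] [Fintype K] (k : K) :
    Module.End ℂ (Finset K → ℂ) where
  toFun ψ := fun S => if k ∈ S then 0 else fsign k S * ψ (insert k S)
  map_add' ψ φ := by funext S; by_cases h : k ∈ S <;> simp [h, mul_add]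
  map_smul' a ψ := by funext S; by_cases h : k ∈ S <;> simp [h]; ring

/-- Creation operator `c†_k`. -/
noncomputable def crOp {K : Type*} [LinearOrder K] [Fintype K] (k : K) :
    Module.End ℂ (Finset K → ℂ) where
  toFun ψ := fun S => if k ∈ S then fsign k (S.erase k) * ψ (S.erase k) else 0
  map_add' ψ φ := by funext S; by_cases h : k ∈ S <;> simp [h, mul_add]
  map_smul' a ψ := by funext S; by_cases h : k ∈ S <;> simp [h]; ring

/-- Number operator `n_k = c†_k c_k`. -/
noncomputable def numOp {K : Type*} [LinearOrder K] [Fintype K] (k : K) :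
    Module.End ℂ (Finset K → ℂ) := crOp k * annOp k

/-- Total number operator `N = Σ_k n_k`. -/
noncomputable def ntotOp {K : Type*} [LinearOrder K] [Fintype K] :
    Module.End ℂ (Finset K → ℂ) where
  toFun ψ := fun S => (S.card : ℂ) * ψ S
  map_add' ψ φ := by funext S; simp [mul_add]
  map_smul' a ψ := by funext S; simp; ring

/-- Fermion parity operator `(−1)^N`. -/
noncomputable def parityOp {K : Type*} [LinearOrder K] [Fintype K] :
    Module.End ℂ (Finset K → ℂ) where
  toFun ψ := fun S => (-1 : ℂ) ^ S.card * ψ S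
  map_add' ψ φ := by funext S; simp [mul_add]
  map_smul' a ψ := by funext S; simp; ring

/-- Inner product on the Fock space. -/
noncomputable def finner {K : Type*} [LinearOrder K] [Fintype K] (φ ψ : Finset K → ℂ) : ℂ :=
  ∑ S : Finset K, conj (φ S) * ψ S

/-- Ordered product of creation operators `c†_{q_1} ⋯ c†_{q_r}` over a finite set of modes. -/
noncomputable def crProd {K : Type*} [LinearOrder K] [Fintype K] (T : Finset K) :
    Module.End ℂ (Finset K → ℂ) :=
  ((T.sort (· ≤ ·)).map crOp).prod

section Aux
set_option linter.unusedSectionVars false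

variable {K : Type*} [LinearOrder K] [Fintype K]

lemma annOp_apply (k : K) (ψ : Finset K → ℂ) (S : Finset K) :
    annOp k ψ S = if k ∈ S then 0 else fsign k S * ψ (insert k S) := rfl

lemma crOp_apply (k : K) (ψ : Finset K → ℂ) (S : Finset K) :
    crOp k ψ S = if k ∈ S then fsign k (S.erase k) * ψ (S.erase k) else 0 := rfl

lemma ntotOp_apply (ψ : Finset K → ℂ) (S : Finset K) :
    (ntotOp ψ) S = (S.card : ℂ) * ψ S := rfl

lemma fsign_sq (k : K) (S : Finset K) : fsign k S * fsign k S = 1 := by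
  unfold fsign; rw [← mul_pow]; norm_num

lemma fsign_ne_zero (k : K) (S : Finset K) : fsign k S ≠ 0 := by
  unfold fsign; exact pow_ne_zero _ (by norm_num)

lemma conj_fsign (k : K) (S : Finset K) : conj (fsign k S) = fsign k S := by
  unfold fsign; rw [map_pow]; norm_num

lemma numOp_apply (q : K) (ψ : Finset K → ℂ) (S : Finset K) :
    numOp q ψ S = if q ∈ S then ψ S else 0 := by
  show crOp q (annOp q ψ) S = _
  by_cases h : q ∈ S
  · simp only [crOp_apply, annOp_apply, h, if_true, Finset.notMem_erase, if_false,
      Finset.insert_erase h, ← mul_assoc, fsign_sq, one_mul]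
  · simp [crOp_apply, h]

/-- `ψ` vanishes on configurations containing `q`. -/
def FOff (q : K) (ψ : Finset K → ℂ) : Prop := ∀ S : Finset K, q ∈ S → ψ S = 0

/-- `ψ` vanishes on configurations not containing `q`. -/
def FOn (q : K) (ψ : Finset K → ℂ) : Prop := ∀ S : Finset K, q ∉ S → ψ S = 0

lemma annOp_eq_zero_iff (q : K) (ψ : Finset K → ℂ) : annOp q ψ = 0 ↔ FOff q ψ := by
  constructor
  · intro h S hq
    have h2 := congrFun h (S.erase q)
    simp only [annOp_apply, Finset.notMem_erase, if_false, Finset.insert_erase hq,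
      Pi.zero_apply] at h2
    exact (mul_eq_zero.1 h2).resolve_left (fsign_ne_zero _ _)
  · intro h; funext S
    simp only [annOp_apply, Pi.zero_apply]
    by_cases hq : q ∈ S
    · simp [hq]
    · simp [hq, h (insert q S) (Finset.mem_insert_self _ _)]

lemma numOp_of_on {q : K} {ψ : Finset K → ℂ} (h : FOn q ψ) : numOp q ψ = ψ := by
  funext S; rw [numOp_apply]; split
  · rfl
  · exact (h S (by assumption)).symm

lemma numOp_of_off {q : K} {ψ : Finset K → ℂ} (h : FOff q ψ) : numOp q ψ = 0 := by
  funext S; rw [numOp_apply]; split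
  · exact h S (by assumption)
  · rfl


lemma finner_add_right (φ ψ χ : Finset K → ℂ) : finner φ (ψ + χ) = finner φ ψ + finner φ χ := by
  simp [finner, mul_add, Finset.sum_add_distrib]

lemma finner_smul_right (a : ℂ) (φ ψ : Finset K → ℂ) :
    finner φ (a • ψ) = a * finner φ ψ := by
  simp only [finner, Pi.smul_apply, smul_eq_mul, Finset.mul_sum]
  exact Finset.sum_congr rfl fun S _ => by ring

lemma finner_smul_left (a : ℂ) (φ ψ : Finset K → ℂ) :
    finner (a • φ) ψ = conj a * finner φ ψ := by
  simp only [finner, Pi.smul_apply, smul_eq_mul, map_mul, Finset.mul_sum]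
  exact Finset.sum_congr rfl fun S _ => by ring

lemma finner_sum_right {ι : Type*} (s : Finset ι) (φ : Finset K → ℂ) (f : ι → Finset K → ℂ) :
    finner φ (∑ i ∈ s, f i) = ∑ i ∈ s, finner φ (f i) := by
  classical
  induction s using Finset.induction with
  | empty => simp [finner]
  | @insert a s h ih => rw [Finset.sum_insert h, finner_add_right, ih, Finset.sum_insert h]

lemma finner_zero_right (φ : Finset K → ℂ) : finner φ 0 = 0 := by simp [finner]

/-- `c†ₖ` is the adjoint of `cₖ`. -/
lemma finner_cr (k : K) (φ ψ : Finset K → ℂ) :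
    finner (crOp k φ) ψ = finner φ (annOp k ψ) := by
  unfold finner
  rw [← Finset.sum_filter_add_sum_filter_not Finset.univ (fun S => k ∈ S)
      (fun S => conj (crOp k φ S) * ψ S),
    ← Finset.sum_filter_add_sum_filter_not Finset.univ (fun S => k ∈ S)
      (fun S => conj (φ S) * annOp k ψ S)]
  have h1 : ∑ S ∈ Finset.univ.filter (fun S => k ∉ S), conj (crOp k φ S) * ψ S = 0 := by
    apply Finset.sum_eq_zero; intro S hS
    simp only [Finset.mem_filter] at hS
    simp [crOp_apply, hS.2]
  have h2 : ∑ S ∈ Finset.univ.filter (fun S => k ∈ S), conj (φ S) * annOp k ψ S = 0 := by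
    apply Finset.sum_eq_zero; intro S hS
    simp only [Finset.mem_filter] at hS
    simp [annOp_apply, hS.2]
  rw [h1, h2, add_zero, zero_add]
  refine Finset.sum_nbij' (fun S => S.erase k) (fun S => insert k S) ?_ ?_ ?_ ?_ ?_
  · intro S hS; simp only [Finset.mem_filter] at hS ⊢
    simp [Finset.notMem_erase]
  · intro S hS; simp only [Finset.mem_filter] at hS ⊢
    simp
  · intro S hS; simp only [Finset.mem_filter] at hS
    exact Finset.insert_erase hS.2
  · intro S hS; simp only [Finset.mem_filter] at hS
    exact Finset.erase_insert hS.2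
  · intro S hS; simp only [Finset.mem_filter] at hS
    simp only [crOp_apply, annOp_apply, hS.2, if_true, Finset.notMem_erase, if_false,
      Finset.insert_erase hS.2, map_mul, conj_fsign]
    ring

lemma ann_cr_of_off {k : K} {ψ : Finset K → ℂ} (h : FOff k ψ) :
    annOp k (crOp k ψ) = ψ := by
  funext S
  by_cases hk : k ∈ S
  · simp [annOp_apply, hk, h S hk]
  · simp only [annOp_apply, hk, if_false, crOp_apply, Finset.mem_insert_self, if_true,
      Finset.erase_insert hk, ← mul_assoc, fsign_sq, one_mul]

lemma crOp_inner {k : K} {ψ : Finset K → ℂ} (h : FOff k ψ) :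
    finner (crOp k ψ) (crOp k ψ) = finner ψ ψ := by
  rw [finner_cr, ann_cr_of_off h]

lemma annOp_inner {k : K} {ψ₁ : Finset K → ℂ} (h : FOn k ψ₁) (ψ₂ : Finset K → ℂ) :
    finner (annOp k ψ₁) (annOp k ψ₂) = finner ψ₁ ψ₂ := by
  rw [← finner_cr]
  show finner (numOp k ψ₁) ψ₂ = _
  rw [numOp_of_on h]

lemma crOp_off {k q : K} (hne : k ≠ q) {ψ : Finset K → ℂ} (h : FOff q ψ) :
    FOff q (crOp k ψ) := by
  intro S hq
  simp only [crOp_apply]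
  split
  · rw [h _ (Finset.mem_erase.2 ⟨fun hh => hne hh.symm, hq⟩), mul_zero]
  · rfl

lemma crOp_on_self (k : K) (ψ : Finset K → ℂ) : FOn k (crOp k ψ) := by
  intro S hk; simp [crOp_apply, hk]

lemma crOp_on {k q : K} (hne : k ≠ q) {ψ : Finset K → ℂ} (h : FOn q ψ) :
    FOn q (crOp k ψ) := by
  intro S hq
  simp only [crOp_apply]
  split
  · rw [h _ (fun hh => hq (Finset.mem_of_mem_erase hh)), mul_zero]
  · rfl

lemma crOp_ntot {k : K} {ψ : Finset K → ℂ} {m : ℂ} (h : ntotOp ψ = m • ψ) :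
    ntotOp (crOp k ψ) = (m + 1) • crOp k ψ := by
  funext S
  by_cases hk : k ∈ S
  · have he := congrFun h (S.erase k)
    simp only [ntotOp_apply, Pi.smul_apply, smul_eq_mul] at he
    simp only [ntotOp_apply, crOp_apply, hk, if_true, Pi.smul_apply, smul_eq_mul]
    have hcard : ((S.erase k).card : ℂ) = (S.card : ℂ) - 1 := by
      rw [Finset.card_erase_of_mem hk]
      have : 1 ≤ S.card := Finset.card_pos.2 ⟨k, hk⟩
      push_cast [Nat.cast_sub this]; ring
    rw [hcard] at he
    linear_combination fsign k (S.erase k) * he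
  · simp [ntotOp_apply, crOp_apply, hk]

lemma annOp_ntot {k : K} {ψ : Finset K → ℂ} {m : ℂ} (h : ntotOp ψ = m • ψ) :
    ntotOp (annOp k ψ) = (m - 1) • annOp k ψ := by
  funext S
  by_cases hk : k ∈ S
  · simp [ntotOp_apply, annOp_apply, hk]
  · have he := congrFun h (insert k S)
    simp only [ntotOp_apply, Pi.smul_apply, smul_eq_mul, Finset.card_insert_of_notMem hk] at he
    simp only [ntotOp_apply, annOp_apply, hk, if_false, Pi.smul_apply, smul_eq_mul]
    push_cast at he
    linear_combination fsign k S * he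


/-- Product of creation operators along a list. -/
noncomputable def crList (l : List K) : Module.End ℂ (Finset K → ℂ) := (l.map crOp).prod

/-- Product of annihilation operators along a list. -/
noncomputable def annList (l : List K) : Module.End ℂ (Finset K → ℂ) := (l.map annOp).prod

lemma crList_nil : (crList ([] : List K)) = 1 := rfl
lemma annList_nil : (annList ([] : List K)) = 1 := rfl

lemma crList_cons (k : K) (l : List K) (ψ : Finset K → ℂ) :
    crList (k :: l) ψ = crOp k (crList l ψ) := by
  show ((List.map crOp (k :: l)).prod) ψ = _
  rw [List.map_cons, List.prod_cons]; rfl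

lemma annList_cons (k : K) (l : List K) (ψ : Finset K → ℂ) :
    annList (k :: l) ψ = annOp k (annList l ψ) := by
  show ((List.map annOp (k :: l)).prod) ψ = _
  rw [List.map_cons, List.prod_cons]; rfl

lemma crProd_eq_crList (T : Finset K) : crProd T = crList (T.sort (· ≤ ·)) := rfl

/-- Main induction for products of creation operators. -/
lemma crList_facts : ∀ l : List K, l.Nodup → ∀ ψ : Finset K → ℂ, (∀ q ∈ l, FOff q ψ) →
    finner (crList l ψ) (crList l ψ) = finner ψ ψ ∧
    (∀ q ∈ l, FOn q (crList l ψ)) ∧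
    (∀ q : K, FOff q ψ → q ∉ l → FOff q (crList l ψ)) := by
  intro l
  induction l with
  | nil => intro _ ψ _; refine ⟨rfl, by simp, fun q hq _ => by simpa [crList_nil] using hq⟩
  | cons k l ih =>
    intro hnd ψ hoff
    obtain ⟨hkl, hnd'⟩ := List.nodup_cons.1 hnd
    obtain ⟨ihn, ihOn, ihOff⟩ := ih hnd' ψ (fun q hq => hoff q (List.mem_cons_of_mem _ hq))
    have hoffk : FOff k (crList l ψ) := ihOff k (hoff k (List.mem_cons_self)) hkl
    refine ⟨?_, ?_, ?_⟩
    · rw [crList_cons, crOp_inner hoffk, ihn]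
    · intro q hq
      rcases List.mem_cons.1 hq with rfl | hq'
      · rw [crList_cons]; exact crOp_on_self _ _
      · rw [crList_cons]
        exact crOp_on (fun h => hkl (by rwa [h])) (ihOn q hq')
    · intro q hqoff hql
      rw [crList_cons]
      exact crOp_off (fun h => hql (by rw [← h]; exact List.mem_cons_self))
        (ihOff q hqoff (fun h => hql (List.mem_cons_of_mem _ h)))

lemma crList_ntot : ∀ (l : List K) (ψ : Finset K → ℂ) (m : ℂ), ntotOp ψ = m • ψ →
    ntotOp (crList l ψ) = (m + l.length) • crList l ψ := by
  intro l
  induction l with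
  | nil => intro ψ m hm; simpa [crList_nil] using hm
  | cons k l ih =>
    intro ψ m hm
    rw [crList_cons]
    have := crOp_ntot (k := k) (ih ψ m hm)
    rw [this]
    congr 1
    simp [List.length_cons]; push_cast; ring

lemma annList_ntot : ∀ (l : List K) (ψ : Finset K → ℂ) (m : ℂ), ntotOp ψ = m • ψ →
    ntotOp (annList l ψ) = (m - l.length) • annList l ψ := by
  intro l
  induction l with
  | nil => intro ψ m hm; simpa [annList_nil] using hm
  | cons k l ih =>
    intro ψ m hm
    rw [annList_cons]
    have := annOp_ntot (k := k) (ih ψ m hm)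
    rw [this]
    congr 1
    simp [List.length_cons]; push_cast; ring

lemma crList_eigen {Ht : Module.End ℂ (Finset K → ℂ)} :
    ∀ (l : List K), (∀ k ∈ l, Ht * crOp k = crOp k * Ht) →
    ∀ (ψ : Finset K → ℂ) (e : ℂ), Ht ψ = e • ψ → Ht (crList l ψ) = e • crList l ψ := by
  intro l
  induction l with
  | nil => intro _ ψ e he; simpa [crList_nil] using he
  | cons k l ih =>
    intro hc ψ e he
    rw [crList_cons]
    have h1 : Ht (crOp k (crList l ψ)) = crOp k (Ht (crList l ψ)) := by
      have := congrArg (fun A => A (crList l ψ)) (hc k (List.mem_cons_self))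
      simpa [Module.End.mul_apply] using this
    rw [h1, ih (fun q hq => hc q (List.mem_cons_of_mem _ hq)) ψ e he, map_smul]

lemma annList_comm {Ht : Module.End ℂ (Finset K → ℂ)} :
    ∀ (l : List K), (∀ k ∈ l, Ht * annOp k = annOp k * Ht) →
    ∀ ψ : Finset K → ℂ, Ht (annList l ψ) = annList l (Ht ψ) := by
  intro l
  induction l with
  | nil => intro _ ψ; simp [annList_nil]
  | cons k l ih =>
    intro hc ψ
    rw [annList_cons, annList_cons]
    have h1 : Ht (annOp k (annList l ψ)) = annOp k (Ht (annList l ψ)) := by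
      have := congrArg (fun A => A (annList l ψ)) (hc k (List.mem_cons_self))
      simpa [Module.End.mul_apply] using this
    rw [h1, ih (fun q hq => hc q (List.mem_cons_of_mem _ hq))]

/-- `ψ` is supported on configurations whose occupation pattern on `K0` is exactly `B`. -/
def FPat (K0 B : Finset K) (ψ : Finset K → ℂ) : Prop :=
  ∀ S : Finset K, S ∩ K0 ≠ B → ψ S = 0

lemma pat_on {K0 B : Finset K} {k : K} (hk : k ∈ B) {ψ : Finset K → ℂ}
    (h : FPat K0 B ψ) : FOn k ψ := by
  intro S hkS
  by_contra hne
  have : S ∩ K0 = B := by by_contra hc; exact hne (h S hc)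
  exact hkS (Finset.mem_of_mem_inter_left (this ▸ hk))

lemma annOp_pat {K0 B : Finset K} {k : K} (hk : k ∈ K0) {ψ : Finset K → ℂ}
    (h : FPat K0 B ψ) : FPat K0 (B.erase k) (annOp k ψ) := by
  intro S hS
  simp only [annOp_apply]
  by_cases hkS : k ∈ S
  · simp [hkS]
  · simp only [hkS, if_false]
    rcases eq_or_ne ((insert k S) ∩ K0) B with he | hne
    · exfalso
      apply hS
      rw [Finset.insert_inter_of_mem hk] at he
      rw [← he, Finset.erase_insert]
      simp [hkS]
    · rw [h _ hne, mul_zero]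

lemma annList_pat {K0 B : Finset K} : ∀ l : List K, (∀ k ∈ l, k ∈ K0) →
    ∀ ψ : Finset K → ℂ, FPat K0 B ψ → FPat K0 (B \ l.toFinset) (annList l ψ) := by
  intro l
  induction l with
  | nil => intro _ ψ h; simpa [annList_nil] using h
  | cons k l ih =>
    intro hl ψ h
    have h1 := annOp_pat (hl k (List.mem_cons_self))
      (ih (fun q hq => hl q (List.mem_cons_of_mem _ hq)) ψ h)
    rw [annList_cons]
    have : (B \ l.toFinset).erase k = B \ (k :: l).toFinset := by
      ext x
      simp [Finset.mem_erase, Finset.mem_sdiff, List.toFinset_cons]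
      tauto
    rwa [this] at h1

lemma annList_inner {K0 B : Finset K} (hBK : B ⊆ K0) :
    ∀ l : List K, l.Nodup → (∀ k ∈ l, k ∈ B) →
    ∀ ψ₁ ψ₂ : Finset K → ℂ, FPat K0 B ψ₁ →
    finner (annList l ψ₁) (annList l ψ₂) = finner ψ₁ ψ₂ := by
  intro l
  induction l with
  | nil => intro _ _ ψ₁ ψ₂ _; rfl
  | cons k l ih =>
    intro hnd hl ψ₁ ψ₂ hp
    obtain ⟨hkl, hnd'⟩ := List.nodup_cons.1 hnd
    have hpat : FPat K0 (B \ l.toFinset) (annList l ψ₁) :=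
      annList_pat l (fun q hq => hBK (hl q (List.mem_cons_of_mem _ hq))) ψ₁ hp
    have hkB : k ∈ B \ l.toFinset := by
      simp only [Finset.mem_sdiff, List.mem_toFinset]
      exact ⟨hl k (List.mem_cons_self), hkl⟩
    have hOn : FOn k (annList l ψ₁) := pat_on hkB hpat
    rw [annList_cons, annList_cons, annOp_inner hOn,
      ih hnd' (fun q hq => hl q (List.mem_cons_of_mem _ hq)) ψ₁ ψ₂ hp]


/-- Basis delta state. -/
noncomputable def fdelta (S' : Finset K) : Finset K → ℂ := fun T => if T = S' then 1 else 0

lemma psi_eq_sum_delta (ψ : Finset K → ℂ) : ψ = ∑ S' : Finset K, ψ S' • fdelta S' := by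
  funext T
  rw [Finset.sum_apply]
  simp only [Pi.smul_apply, fdelta, smul_eq_mul]
  rw [Finset.sum_eq_single T (fun b _ hb => by simp [Ne.symm hb]) (by simp)]
  simp

lemma apply_eq_sum (A : Module.End ℂ (Finset K → ℂ)) (ψ : Finset K → ℂ) (S : Finset K) :
    A ψ S = ∑ S' : Finset K, ψ S' * A (fdelta S') S := by
  conv_lhs => rw [psi_eq_sum_delta ψ]
  rw [map_sum, Finset.sum_apply]
  exact Finset.sum_congr rfl fun S' _ => by rw [map_smul]; rfl

lemma numOp_delta (q : K) (S' : Finset K) :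
    numOp q (fdelta S') = if q ∈ S' then fdelta S' else 0 := by
  funext T
  rw [numOp_apply]
  by_cases hT : T = S'
  · subst hT; split <;> simp_all
  · simp [fdelta, hT]; split <;> simp [fdelta, hT]

lemma delta_pat {K0 : Finset K} {Ht : Module.End ℂ (Finset K → ℂ)}
    (hcomm : ∀ q ∈ K0, Ht * numOp q = numOp q * Ht) {S S' : Finset K}
    (hne : S ∩ K0 ≠ S' ∩ K0) : Ht (fdelta S') S = 0 := by
  have hq : ∃ q ∈ K0, ¬(q ∈ S ↔ q ∈ S') := by
    by_contra hc
    push_neg at hc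
    apply hne
    ext x
    simp only [Finset.mem_inter]
    constructor
    · rintro ⟨h1, h2⟩; exact ⟨(hc x h2).1 h1, h2⟩
    · rintro ⟨h1, h2⟩; exact ⟨(hc x h2).2 h1, h2⟩
  obtain ⟨q, hqK, hqiff⟩ := hq
  have h1 := congrArg (fun A => A (fdelta S') S) (hcomm q hqK)
  simp only [Module.End.mul_apply] at h1
  rw [numOp_delta] at h1
  rw [numOp_apply] at h1
  by_cases h2 : q ∈ S'
  · have h3 : q ∉ S := fun h => hqiff ⟨fun _ => h2, fun _ => h⟩
    simpa [h2, h3] using h1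
  · have h3 : q ∈ S := by
      by_contra h3
      exact hqiff ⟨fun h => absurd h h3, fun h => absurd h h2⟩
    exact (by simpa [h2, h3] using h1 : (0:ℂ) = Ht (fdelta S') S).symm

lemma Ht_pat {K0 : Finset K} {Ht : Module.End ℂ (Finset K → ℂ)}
    (hcomm : ∀ q ∈ K0, Ht * numOp q = numOp q * Ht) {B : Finset K} {ψ : Finset K → ℂ}
    (hp : FPat K0 B ψ) : FPat K0 B (Ht ψ) := by
  intro S hS
  rw [apply_eq_sum]
  apply Finset.sum_eq_zero
  intro S' _
  by_cases h1 : S' ∩ K0 = B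
  · rw [delta_pat hcomm (by rw [h1]; exact hS), mul_zero]
  · rw [hp S' h1, zero_mul]

/-- Projection onto the subspace with occupation pattern `B` on `K0`. -/
noncomputable def patProj (K0 B : Finset K) (ψ : Finset K → ℂ) : Finset K → ℂ :=
  fun S => if S ∩ K0 = B then ψ S else 0

lemma patProj_pat (K0 B : Finset K) (ψ : Finset K → ℂ) : FPat K0 B (patProj K0 B ψ) := by
  intro S hS; simp [patProj, hS]

lemma sum_patProj (K0 : Finset K) (ψ : Finset K → ℂ) :
    ∑ B ∈ K0.powerset, patProj K0 B ψ = ψ := by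
  funext S
  rw [Finset.sum_apply]
  simp only [patProj]
  rw [Finset.sum_eq_single (S ∩ K0) (fun b _ hb => by simp [Ne.symm hb])
    (fun h => absurd (Finset.mem_powerset.2 Finset.inter_subset_right) h)]
  simp

lemma finner_patProj {K0 B : Finset K} (ψ : Finset K → ℂ) {X : Finset K → ℂ}
    (hX : FPat K0 B X) : finner ψ X = finner (patProj K0 B ψ) X := by
  unfold finner
  apply Finset.sum_congr rfl
  intro S _
  by_cases h : S ∩ K0 = B
  · simp [patProj, h]
  · simp [patProj, h, hX S h]

/-- The norm-squared functional. -/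
noncomputable def fnrm (ψ : Finset K → ℂ) : ℝ := ∑ S : Finset K, Complex.normSq (ψ S)

lemma finner_self (ψ : Finset K → ℂ) : finner ψ ψ = ((fnrm ψ : ℝ) : ℂ) := by
  unfold finner fnrm
  push_cast
  exact Finset.sum_congr rfl fun S _ => by
    rw [Complex.normSq_eq_conj_mul_self]

lemma fnrm_nonneg (ψ : Finset K → ℂ) : 0 ≤ fnrm ψ :=
  Finset.sum_nonneg fun S _ => Complex.normSq_nonneg _

lemma fnrm_eq_zero {ψ : Finset K → ℂ} (h : fnrm ψ = 0) : ψ = 0 := by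
  funext S
  have := (Finset.sum_eq_zero_iff_of_nonneg (fun S _ => Complex.normSq_nonneg (ψ S))).1 h S
    (Finset.mem_univ S)
  exact Complex.normSq_eq_zero.1 this


lemma finner_eq_inner (φ ψ : Finset K → ℂ) :
    finner φ ψ = @inner ℂ (EuclideanSpace ℂ (Finset K)) _ (WithLp.toLp 2 φ) (WithLp.toLp 2 ψ) := by
  rw [PiLp.inner_apply]
  exact Finset.sum_congr rfl fun S _ => by rw [RCLike.inner_apply']

/-- Quadratic forms of a fixed operator are bounded on the unit sphere. -/
lemma exists_bound (A : Module.End ℂ (Finset K → ℂ)) :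
    ∃ C : ℝ, ∀ ψ : Finset K → ℂ, finner ψ ψ = 1 → |(finner ψ (A ψ)).re| ≤ C := by
  classical
  let A' : EuclideanSpace ℂ (Finset K) →ₗ[ℂ] EuclideanSpace ℂ (Finset K) :=
    { toFun := fun x => WithLp.toLp 2 (A x)
      map_add' := fun x y => congrArg (WithLp.toLp 2) (A.map_add x y)
      map_smul' := fun c x => congrArg (WithLp.toLp 2) (A.map_smul c x) }
  let A'' := LinearMap.toContinuousLinearMap A'
  refine ⟨‖A''‖, fun ψ h1 => ?_⟩
  set x : EuclideanSpace ℂ (Finset K) := WithLp.toLp 2 ψ with hx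
  have hinner : @inner ℂ (EuclideanSpace ℂ (Finset K)) _ x x = 1 := by
    rw [← finner_eq_inner]; exact h1
  have hnorm : ‖x‖ = 1 := by
    have h3 : ‖x‖ ^ 2 = 1 := by
      rw [← inner_self_eq_norm_sq (𝕜 := ℂ) x, hinner]
      simp
    nlinarith [norm_nonneg x]
  have hval : finner ψ (A ψ) = @inner ℂ (EuclideanSpace ℂ (Finset K)) _ x (A'' x) := by
    rw [finner_eq_inner]; rfl
  rw [hval]
  calc |(@inner ℂ (EuclideanSpace ℂ (Finset K)) _ x (A'' x)).re|
      ≤ ‖@inner ℂ (EuclideanSpace ℂ (Finset K)) _ x (A'' x)‖ := Complex.abs_re_le_norm _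
    _ ≤ ‖x‖ * ‖A'' x‖ := norm_inner_le_norm _ _
    _ ≤ ‖x‖ * (‖A''‖ * ‖x‖) := by
        exact mul_le_mul_of_nonneg_left (A''.le_opNorm x) (norm_nonneg x)
    _ = ‖A''‖ := by rw [hnorm]; ring


lemma sum_eps_lb {K0 B : Finset K} (hB : B ⊆ K0) (ε : K → ℝ) :
    ∑ q ∈ K0.filter (fun q => ε q < 0), ε q ≤ ∑ q ∈ B, ε q := by
  have h1 : ∑ q ∈ K0.filter (fun q => ε q < 0), ε q ≤ ∑ q ∈ B.filter (fun q => ε q < 0), ε q := by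
    have hneg : ∑ q ∈ B.filter (fun q => ε q < 0), -ε q ≤
        ∑ q ∈ K0.filter (fun q => ε q < 0), -ε q := by
      apply Finset.sum_le_sum_of_subset_of_nonneg
      · exact Finset.filter_subset_filter _ hB
      · intro q hq _
        simp only [Finset.mem_filter] at hq
        linarith [hq.2]
    have := neg_le_neg hneg
    simpa using this
  have h2 : ∑ q ∈ B.filter (fun q => ε q < 0), ε q ≤ ∑ q ∈ B, ε q := by
    apply Finset.sum_le_sum_of_subset_of_nonneg (Finset.filter_subset _ _)
    intro q hqB hqf
    simp only [Finset.mem_filter, not_and, not_lt] at hqf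
    exact hqf hqB
  linarith

/-- The fundamental variational lower bound for the energy in any number sector. -/
lemma energy_lb (K0 : Finset K) (ε : K → ℝ)
    (Ht H : Module.End ℂ (Finset K → ℂ))
    (hH : H = (∑ q ∈ K0, (ε q : ℂ) • numOp q) + Ht)
    (hHtSupp : ∀ q ∈ K0, Ht * annOp q = annOp q * Ht ∧ Ht * crOp q = crOp q * Ht)
    (Etil : ℕ → ℝ)
    (hEtil : ∀ M : ℕ, Etil M = sInf {x : ℝ | ∃ ψ : Finset K → ℂ,
      finner ψ ψ = 1 ∧ (∀ q ∈ K0, annOp q ψ = 0) ∧ ntotOp ψ = (M : ℂ) • ψ ∧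
      x = (finner ψ (Ht ψ)).re})
    (Mstar : ℕ)
    (hMmin : ∀ M : ℕ, M ≤ Fintype.card K - K0.card → Etil Mstar ≤ Etil M)
    (CHt : ℝ) (hCHt : ∀ ψ : Finset K → ℂ, finner ψ ψ = 1 → |(finner ψ (Ht ψ)).re| ≤ CHt)
    (N : ℕ) (ψ : Finset K → ℂ) (h1 : finner ψ ψ = 1) (h2 : ntotOp ψ = (N : ℂ) • ψ) :
    (∑ q ∈ K0.filter (fun q => ε q < 0), ε q) + Etil Mstar ≤ (finner ψ (H ψ)).re := by
  classical
  have hnum : ∀ q ∈ K0, Ht * numOp q = numOp q * Ht := by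
    intro q hq
    obtain ⟨ha, hc⟩ := hHtSupp q hq
    show Ht * (crOp q * annOp q) = (crOp q * annOp q) * Ht
    rw [← mul_assoc, hc, mul_assoc, ha, ← mul_assoc]
  set E' : ℝ := (∑ q ∈ K0.filter (fun q => ε q < 0), ε q) + Etil Mstar with hE'
  set P : Finset K → (Finset K → ℂ) := fun B => patProj K0 B ψ with hP
  set n : Finset K → ℝ := fun B => fnrm (P B) with hn
  have hPpat : ∀ B, FPat K0 B (P B) := fun B => patProj_pat K0 B ψ
  have hdec : ψ = ∑ B ∈ K0.powerset, P B := (sum_patProj K0 ψ).symm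
  have hinnerP : ∀ B, finner ψ (P B) = ((n B : ℝ) : ℂ) := by
    intro B
    rw [finner_patProj ψ (hPpat B), finner_self]
  have hsum_n : ∑ B ∈ K0.powerset, n B = 1 := by
    have hc : finner ψ ψ = ∑ B ∈ K0.powerset, ((n B : ℝ) : ℂ) := by
      have e : finner ψ ψ = finner ψ (∑ B ∈ K0.powerset, P B) := by rw [← hdec]
      rw [e, finner_sum_right]
      exact Finset.sum_congr rfl fun B _ => hinnerP B
    rw [h1] at hc
    have := congrArg Complex.re hc.symm
    simpa [Complex.re_sum] using this
  have hP_ntot : ∀ B, ntotOp (P B) = (N : ℂ) • (P B) := by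
    intro B
    funext S
    have hS := congrFun h2 S
    simp only [ntotOp_apply, Pi.smul_apply, smul_eq_mul] at hS ⊢
    simp only [hP, patProj]
    by_cases hp : S ∩ K0 = B
    · simp only [hp, if_true]; exact hS
    · simp [hp]
  -- expansion of the energy
  have hnq : ∀ q ∈ K0, ∀ B ∈ K0.powerset, numOp q (P B) = if q ∈ B then P B else 0 := by
    intro q hq B hB
    have hBK : B ⊆ K0 := Finset.mem_powerset.1 hB
    funext S
    rw [numOp_apply]
    by_cases hp : S ∩ K0 = B
    · have hiff : q ∈ S ↔ q ∈ B := by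
        rw [← hp]
        simp [Finset.mem_inter, hq]
      by_cases hqB : q ∈ B
      · simp [hqB, hiff.2 hqB]
      · have hqS : q ∉ S := fun h => hqB (hiff.1 h)
        simp [hqB, hqS]
    · have hz : P B S = 0 := (hPpat B) S hp
      simp [hz]
      split <;> simp [hz]
  have hexp : (finner ψ (H ψ)).re =
      ∑ B ∈ K0.powerset, ((∑ q ∈ B, ε q) * n B + (finner (P B) (Ht (P B))).re) := by
    have hHψ : finner ψ (H ψ) =
        (∑ q ∈ K0, (ε q : ℂ) * finner ψ (numOp q ψ)) + finner ψ (Ht ψ) := by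
      rw [hH]
      simp only [LinearMap.add_apply, LinearMap.coe_sum, Finset.sum_apply,
        LinearMap.smul_apply]
      rw [finner_add_right, finner_sum_right]
      congr 1
      exact Finset.sum_congr rfl fun q _ => by rw [finner_smul_right]
    have hterm1 : ∀ q ∈ K0, finner ψ (numOp q ψ) =
        ∑ B ∈ K0.powerset, (if q ∈ B then ((n B : ℝ) : ℂ) else 0) := by
      intro q hq
      have e : numOp q ψ = ∑ B ∈ K0.powerset, numOp q (P B) := by
        conv_lhs => rw [hdec]
        rw [map_sum]
      rw [e, finner_sum_right]
      apply Finset.sum_congr rfl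
      intro B hB
      rw [hnq q hq B hB]
      split
      · exact hinnerP B
      · exact finner_zero_right ψ
    have hterm2 : finner ψ (Ht ψ) = ∑ B ∈ K0.powerset, finner (P B) (Ht (P B)) := by
      have e : Ht ψ = ∑ B ∈ K0.powerset, Ht (P B) := by
        conv_lhs => rw [hdec]
        rw [map_sum]
      rw [e, finner_sum_right]
      apply Finset.sum_congr rfl
      intro B _
      exact finner_patProj ψ (Ht_pat hnum (hPpat B))
    rw [hHψ]
    simp only [Complex.add_re, Complex.re_sum]
    have hswap : ∑ q ∈ K0, ((ε q : ℂ) * finner ψ (numOp q ψ)).re =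
        ∑ B ∈ K0.powerset, (∑ q ∈ B, ε q) * n B := by
      have h3 : ∀ q ∈ K0, ((ε q : ℂ) * finner ψ (numOp q ψ)).re =
          ∑ B ∈ K0.powerset, (if q ∈ B then ε q * n B else 0) := by
        intro q hq
        rw [hterm1 q hq, Finset.mul_sum, Complex.re_sum]
        apply Finset.sum_congr rfl
        intro B _
        split
        · rw [Complex.re_ofReal_mul]; simp
        · simp
      rw [Finset.sum_congr rfl h3, Finset.sum_comm]
      apply Finset.sum_congr rfl
      intro B hB
      have hBK : B ⊆ K0 := Finset.mem_powerset.1 hB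
      rw [Finset.sum_ite_mem, Finset.inter_eq_right.2 hBK, Finset.sum_mul]
    rw [hswap, show (finner ψ (Ht ψ)).re = ∑ B ∈ K0.powerset, (finner (P B) (Ht (P B))).re
        from by rw [hterm2, Complex.re_sum], ← Finset.sum_add_distrib]
  rw [hexp]
  -- bounding each term
  have key : ∀ B ∈ K0.powerset,
      E' * n B ≤ (∑ q ∈ B, ε q) * n B + (finner (P B) (Ht (P B))).re := by
    intro B hB
    have hBK : B ⊆ K0 := Finset.mem_powerset.1 hB
    rcases eq_or_lt_of_le (fnrm_nonneg (P B)) with h0 | hpos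
    · have hz : P B = 0 := fnrm_eq_zero h0.symm
      rw [show n B = 0 from h0.symm, mul_zero, mul_zero, hz]
      simp [finner_zero_right]
    · -- n B > 0
      have hnB0 : n B ≠ 0 := ne_of_gt hpos
      obtain ⟨S0, hS0⟩ : ∃ S0, P B S0 ≠ 0 := by
        by_contra hc
        push_neg at hc
        exact hnB0 (by rw [hn]; simp only; rw [funext hc]; simp [fnrm])
      have hS0pat : S0 ∩ K0 = B := by
        by_contra hc
        exact hS0 ((hPpat B) S0 hc)
      have hS0card : S0.card = N := by
        have := congrFun (hP_ntot B) S0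
        simp only [ntotOp_apply, Pi.smul_apply, smul_eq_mul] at this
        have := mul_right_cancel₀ hS0 this
        exact_mod_cast this
      have hBcard : B.card ≤ N := by
        rw [← hS0card, ← hS0pat]
        exact Finset.card_le_card Finset.inter_subset_left
      have hM' : N - B.card ≤ Fintype.card K - K0.card := by
        have hc1 : (S0 \ K0).card + (S0 ∩ K0).card = S0.card :=
          Finset.card_sdiff_add_card_inter S0 K0
        rw [hS0pat, hS0card] at hc1
        have hc2 : (S0 \ K0).card ≤ (Finset.univ \ K0).card :=
          Finset.card_le_card (Finset.sdiff_subset_sdiff (Finset.subset_univ S0) le_rfl)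
        rw [Finset.card_sdiff_of_subset (Finset.subset_univ K0), Finset.card_univ] at hc2
        omega
      -- normalize
      set r : ℝ := Real.sqrt (n B) with hr
      have hrpos : 0 < r := Real.sqrt_pos.2 hpos
      have hr2 : r * r = n B := Real.mul_self_sqrt (le_of_lt hpos)
      set φ : Finset K → ℂ := ((r⁻¹ : ℝ) : ℂ) • P B with hφ
      have hφpat : FPat K0 B φ := by
        intro S hS
        simp [hφ, (hPpat B) S hS]
      have hr0 : r ≠ 0 := ne_of_gt hrpos
      have hkey : r⁻¹ * (r⁻¹ * fnrm (P B)) = 1 := by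
        field_simp
        linarith [hr2]
      have hφinner : finner φ φ = 1 := by
        rw [hφ, finner_smul_left, finner_smul_right, finner_self, Complex.conj_ofReal]
        rw [← Complex.ofReal_mul, ← Complex.ofReal_mul, hkey]
        simp
      have hφntot : ntotOp φ = (N : ℂ) • φ := by
        rw [hφ, map_smul, hP_ntot B, smul_comm]
      have hφHt : finner (P B) (Ht (P B)) = ((n B : ℝ) : ℂ) * finner φ (Ht φ) := by
        rw [hφ, map_smul, finner_smul_left, finner_smul_right, Complex.conj_ofReal]
        have hkeyC : ((r⁻¹ : ℝ) : ℂ) * (((r⁻¹ : ℝ) : ℂ) * ((fnrm (P B) : ℝ) : ℂ)) = 1 := by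
          rw [← Complex.ofReal_mul, ← Complex.ofReal_mul, hkey]; simp
        linear_combination (-(finner (P B) (Ht (P B)))) * hkeyC
      -- strip the K0 modes
      set l : List K := B.sort (· ≤ ·) with hl
      have hlnd : l.Nodup := Finset.sort_nodup _ _
      have hlmem : ∀ k ∈ l, k ∈ B := fun k hk => (Finset.mem_sort _).1 hk
      set χ : Finset K → ℂ := annList l φ with hχ
      have hχinner : finner χ χ = 1 := by
        rw [hχ, annList_inner hBK l hlnd hlmem φ φ hφpat, hφinner]
      have hχpat : FPat K0 ∅ χ := by
        have := annList_pat (B := B) l (fun k hk => hBK (hlmem k hk)) φ hφpat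
        rwa [hl, Finset.sort_toFinset, Finset.sdiff_self] at this
      have hχann : ∀ q ∈ K0, annOp q χ = 0 := by
        intro q hq
        rw [annOp_eq_zero_iff]
        intro S hS
        exact hχpat S (by
          intro hc
          have : q ∈ S ∩ K0 := Finset.mem_inter.2 ⟨hS, hq⟩
          rw [hc] at this
          exact absurd this (Finset.notMem_empty q))
      have hχntot : ntotOp χ = ((N - B.card : ℕ) : ℂ) • χ := by
        have := annList_ntot l φ (N : ℂ) hφntot
        rw [hχ, this]
        congr 1
        rw [hl, Finset.length_sort]
        push_cast [Nat.cast_sub hBcard]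
        ring
      have hχHt : finner χ (Ht χ) = finner φ (Ht φ) := by
        have hcomm : Ht χ = annList l (Ht φ) :=
          annList_comm l (fun k hk => (hHtSupp k (hBK (hlmem k hk))).1) φ
        rw [hχ, hcomm, annList_inner hBK l hlnd hlmem φ (Ht φ) hφpat]
      -- variational bound
      have hbdd : BddBelow {x : ℝ | ∃ ψ' : Finset K → ℂ,
          finner ψ' ψ' = 1 ∧ (∀ q ∈ K0, annOp q ψ' = 0) ∧
          ntotOp ψ' = ((N - B.card : ℕ) : ℂ) • ψ' ∧ x = (finner ψ' (Ht ψ')).re} := by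
        refine ⟨-CHt, fun x hx => ?_⟩
        obtain ⟨ψ', hn1, _, _, hx4⟩ := hx
        have := hCHt ψ' hn1
        rw [hx4]
        linarith [abs_le.1 this |>.1]
      have hmem : (finner χ (Ht χ)).re ∈ {x : ℝ | ∃ ψ' : Finset K → ℂ,
          finner ψ' ψ' = 1 ∧ (∀ q ∈ K0, annOp q ψ' = 0) ∧
          ntotOp ψ' = ((N - B.card : ℕ) : ℂ) • ψ' ∧ x = (finner ψ' (Ht ψ')).re} :=
        ⟨χ, hχinner, hχann, hχntot, rfl⟩
      have hEt1 : Etil (N - B.card) ≤ (finner χ (Ht χ)).re := by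
        rw [hEtil]
        exact csInf_le hbdd hmem
      have hEt2 : Etil Mstar ≤ (finner φ (Ht φ)).re := by
        rw [← hχHt]
        exact le_trans (hMmin _ hM') hEt1
      have hre : (finner (P B) (Ht (P B))).re = n B * (finner φ (Ht φ)).re := by
        rw [hφHt, Complex.re_ofReal_mul]
      have heps := sum_eps_lb hBK ε
      rw [hre]
      have h4 : E' * n B = (∑ q ∈ K0.filter (fun q => ε q < 0), ε q) * n B +
          Etil Mstar * n B := by rw [hE']; ring
      rw [h4]
      have h5 : (∑ q ∈ K0.filter (fun q => ε q < 0), ε q) * n B ≤ (∑ q ∈ B, ε q) * n B :=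
        mul_le_mul_of_nonneg_right heps (le_of_lt hpos)
      have h6 : Etil Mstar * n B ≤ n B * (finner φ (Ht φ)).re := by
        rw [mul_comm]
        exact mul_le_mul_of_nonneg_left hEt2 (le_of_lt hpos)
      linarith
  calc E' = E' * ∑ B ∈ K0.powerset, n B := by rw [hsum_n, mul_one]
    _ = ∑ B ∈ K0.powerset, E' * n B := by rw [Finset.mul_sum]
    _ ≤ _ := Finset.sum_le_sum key

end Aux

/-- with `H = Σ_{q∈K₀} ε_q n_q + H̃` as before, the trial state
`ψ_t = Π_{q∈K₀, ε_q<0} c†_q |ψ̃⟩`, with `ψ̃` a ground state of `H̃` in its optimal `M*`-particle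
sector, is a normalized state of particle number `M** = M* + Σ_q h_q` and energy
`Σ_q h_q ε_q + Ẽ₀(M*)`; consequently `E₀(M**) = Σ_q h_q ε_q + Ẽ₀(M*)` and
`E₀(N) ≥ E₀(M**)` for all `N`. -/
theorem stmt9 {K : Type*} [LinearOrder K] [Fintype K]
    (K0 : Finset K) (ε : K → ℝ) (hε : ∀ q ∈ K0, ε q ≠ 0)
    (Ht H : Module.End ℂ (Finset K → ℂ))
    (hH : H = (∑ q ∈ K0, (ε q : ℂ) • numOp q) + Ht)
    (hHtSupp : ∀ q ∈ K0, Ht * annOp q = annOp q * Ht ∧ Ht * crOp q = crOp q * Ht)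
    (hHerm : ∀ φ ψ : Finset K → ℂ, finner (Ht φ) ψ = finner φ (Ht ψ))
    (hNum : Ht * ntotOp = ntotOp * Ht)
    (Esec : ℕ → ℝ)
    (hEsec : ∀ N : ℕ, Esec N = sInf {x : ℝ | ∃ ψ : Finset K → ℂ,
      finner ψ ψ = 1 ∧ ntotOp ψ = (N : ℂ) • ψ ∧ x = (finner ψ (H ψ)).re})
    (Etil : ℕ → ℝ)
    (hEtil : ∀ M : ℕ, Etil M = sInf {x : ℝ | ∃ ψ : Finset K → ℂ,
      finner ψ ψ = 1 ∧ (∀ q ∈ K0, annOp q ψ = 0) ∧ ntotOp ψ = (M : ℂ) • ψ ∧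
      x = (finner ψ (Ht ψ)).re})
    (Mstar : ℕ) (hMle : Mstar ≤ Fintype.card K - K0.card)
    (hMmin : ∀ M : ℕ, M ≤ Fintype.card K - K0.card → Etil Mstar ≤ Etil M)
    (h : K → ℝ) (hhh : ∀ q, h q = (1 - Real.sign (ε q)) / 2)
    (tψ : Finset K → ℂ) (htnorm : finner tψ tψ = 1)
    (htann : ∀ q ∈ K0, annOp q tψ = 0)
    (htsec : ntotOp tψ = (Mstar : ℂ) • tψ)
    (htgs : Ht tψ = ((Etil Mstar : ℝ) : ℂ) • tψ)
    (ψt : Finset K → ℂ) (hψt : ψt = crProd (K0.filter (fun q => ε q < 0)) tψ)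
    (Mss : ℕ) (hMss : Mss = Mstar + (K0.filter (fun q => ε q < 0)).card) :
    finner ψt ψt = 1 ∧
    ntotOp ψt = (Mss : ℂ) • ψt ∧
    (finner ψt (H ψt)).re = (∑ q ∈ K0, h q * ε q) + Etil Mstar ∧
    Esec Mss = (∑ q ∈ K0, h q * ε q) + Etil Mstar ∧
    (∀ N : ℕ, N ≤ Fintype.card K → Esec Mss ≤ Esec N) := by
  classical
  set T : Finset K := K0.filter (fun q => ε q < 0) with hT
  have hTK0 : T ⊆ K0 := Finset.filter_subset _ _
  set l : List K := T.sort (· ≤ ·) with hl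
  have hlnd : l.Nodup := Finset.sort_nodup _ _
  have hlmem : ∀ k ∈ l, k ∈ T := fun k hk => (Finset.mem_sort _).1 hk
  have htoff : ∀ q ∈ K0, FOff q tψ := fun q hq => (annOp_eq_zero_iff q tψ).1 (htann q hq)
  have hψt' : ψt = crList l tψ := by rw [hψt, crProd_eq_crList]
  obtain ⟨hnrm, hOn, hOffp⟩ := crList_facts l hlnd tψ (fun q hq => htoff q (hTK0 (hlmem q hq)))
  have part1 : finner ψt ψt = 1 := by rw [hψt', hnrm, htnorm]
  have part2 : ntotOp ψt = (Mss : ℂ) • ψt := by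
    rw [hψt', crList_ntot l tψ (Mstar : ℂ) htsec]
    congr 1
    rw [hl, Finset.length_sort, hMss]
    push_cast
    ring
  have hnum_on : ∀ q ∈ T, numOp q ψt = ψt := fun q hq => by
    rw [hψt']; exact numOp_of_on (hOn q ((Finset.mem_sort _).2 hq))
  have hnum_off : ∀ q ∈ K0, q ∉ T → numOp q ψt = 0 := fun q hq hqT => by
    rw [hψt']
    exact numOp_of_off (hOffp q (htoff q hq) (fun hmem => hqT (hlmem q hmem)))
  have hHtψt : Ht ψt = ((Etil Mstar : ℝ) : ℂ) • ψt := by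
    rw [hψt']
    exact crList_eigen l (fun k hk => (hHtSupp k (hTK0 (hlmem k hk))).2) tψ _ (by
      rw [← hψt'] at *
      exact htgs)
  have hcsum : (∑ q ∈ K0, h q * ε q) = ∑ q ∈ T, ε q := by
    rw [hT, Finset.sum_filter]
    apply Finset.sum_congr rfl
    intro q hq
    rcases lt_or_gt_of_ne (hε q hq) with hlt | hgt
    · rw [hhh q, Real.sign_of_neg hlt, if_pos hlt]
      ring
    · rw [hhh q, Real.sign_of_pos hgt, if_neg (not_lt.2 hgt.le)]
      ring
  have part3 : (finner ψt (H ψt)).re = (∑ q ∈ K0, h q * ε q) + Etil Mstar := by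
    have hsum_num : ∑ q ∈ K0, ((ε q : ℂ) • numOp q) ψt =
        (((∑ q ∈ T, ε q : ℝ) : ℂ)) • ψt := by
      have e1 : ∀ q ∈ K0, ((ε q : ℂ) • numOp q) ψt =
          (if q ∈ T then (ε q : ℂ) • ψt else 0) := by
        intro q hq
        by_cases hqT : q ∈ T
        · simp only [hqT, if_true, LinearMap.smul_apply]
          rw [hnum_on q hqT]
        · simp only [hqT, if_false, LinearMap.smul_apply]
          rw [hnum_off q hq hqT]
          simp
      rw [Finset.sum_congr rfl e1, Finset.sum_ite_mem, Finset.inter_eq_right.2 hTK0,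
        ← Finset.sum_smul]
      congr 1
      push_cast
      rfl
    have hHψt : H ψt = ((((∑ q ∈ T, ε q) + Etil Mstar : ℝ)) : ℂ) • ψt := by
      rw [hH]
      have : ((∑ q ∈ K0, (ε q : ℂ) • numOp q) + Ht) ψt =
          (∑ q ∈ K0, ((ε q : ℂ) • numOp q) ψt) + Ht ψt := by
        simp [LinearMap.add_apply]
      rw [this, hsum_num, hHtψt, ← add_smul]
      congr 1
      push_cast
      ring
    rw [hHψt, finner_smul_right, part1, mul_one, Complex.ofReal_re, hcsum]
  obtain ⟨CH, hCH⟩ := exists_bound H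
  obtain ⟨CHt', hCHt⟩ := exists_bound Ht
  have hlb := energy_lb K0 ε Ht H hH hHtSupp Etil hEtil Mstar hMmin CHt' hCHt
  have hmemMss : ((∑ q ∈ K0, h q * ε q) + Etil Mstar) ∈ {x : ℝ | ∃ ψ : Finset K → ℂ,
      finner ψ ψ = 1 ∧ ntotOp ψ = (Mss : ℂ) • ψ ∧ x = (finner ψ (H ψ)).re} :=
    ⟨ψt, part1, part2, part3.symm⟩
  have hbddH : ∀ N : ℕ, BddBelow {x : ℝ | ∃ ψ : Finset K → ℂ,
      finner ψ ψ = 1 ∧ ntotOp ψ = (N : ℂ) • ψ ∧ x = (finner ψ (H ψ)).re} := by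
    intro N
    refine ⟨-CH, fun x hx => ?_⟩
    obtain ⟨ψ', hn1, _, hx3⟩ := hx
    rw [hx3]
    linarith [abs_le.1 (hCH ψ' hn1) |>.1]
  have part4 : Esec Mss = (∑ q ∈ K0, h q * ε q) + Etil Mstar := by
    rw [hEsec]
    apply le_antisymm
    · exact csInf_le (hbddH Mss) hmemMss
    · apply le_csInf ⟨_, hmemMss⟩
      rintro x ⟨ψ', hn1, hn2, rfl⟩
      have := hlb Mss ψ' hn1 hn2
      rw [hcsum]
      exact this
  refine ⟨part1, part2, part3, part4, ?_⟩
  intro N hN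
  rw [part4, hEsec N]
  obtain ⟨S0, _, hS0card⟩ :=
    Finset.exists_subset_card_eq (by rwa [Finset.card_univ] : N ≤ (Finset.univ : Finset K).card)
  set ψ0 : Finset K → ℂ := fdelta S0 with hψ0
  have hψ0n : finner ψ0 ψ0 = 1 := by
    unfold finner
    rw [Finset.sum_eq_single S0 (fun b _ hb => by simp [hψ0, fdelta, hb]) (by simp)]
    simp [hψ0, fdelta]
  have hψ0t : ntotOp ψ0 = (N : ℂ) • ψ0 := by
    funext S
    simp only [ntotOp_apply, Pi.smul_apply, smul_eq_mul, hψ0, fdelta]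
    by_cases hS : S = S0
    · subst hS
      simp [hS0card]
    · simp [hS]
  have hne : Set.Nonempty {x : ℝ | ∃ ψ : Finset K → ℂ,
      finner ψ ψ = 1 ∧ ntotOp ψ = (N : ℂ) • ψ ∧ x = (finner ψ (H ψ)).re} :=
    ⟨(finner ψ0 (H ψ0)).re, ψ0, hψ0n, hψ0t, rfl⟩
  apply le_csInf hne
  rintro x ⟨ψ', hn1, hn2, rfl⟩
  have := hlb N ψ' hn1 hn2
  rw [hcsum]
  exact this
end

section
/- Let H₀ and H₁ be Hermitian operators on a finite-dimensional Hilbert space, both commuting with a fixed unitary involution P (fermion parity), and set H_s = (1−s)H₀ + sH₁ for s ∈ [0,1]. Suppose that for every s ∈ [0,1], H_s has a nonzero parity gap: its ground state eigenspace lies entirely in one P-eigenspace and the lowest energy in the opposite P-eigenspace is strictly larger. Then the ground state parity eigenvalue of H_s is constant in s; in particular H₁ has the same ground state parity as H₀. -/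
open Matrix Finset

lemma aux_entry {n : ℕ} (ψ : Fin n → ℂ) (h : star ψ ⬝ᵥ ψ = 1) (i : Fin n) :
    ‖ψ i‖ ≤ 1 := by
  have h1 : ∑ j, Complex.normSq (ψ j) = 1 := by
    have := congrArg Complex.re h
    simpa [dotProduct, Complex.normSq_eq_conj_mul_self, Complex.normSq_apply] using this
  have h2 : Complex.normSq (ψ i) ≤ 1 := by
    rw [← h1]
    exact Finset.single_le_sum (fun j _ => Complex.normSq_nonneg _) (Finset.mem_univ i)
  have h3 : ‖ψ i‖ ^ 2 ≤ 1 := by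
    simpa [Complex.normSq_eq_norm_sq] using h2
  nlinarith [norm_nonneg (ψ i)]

lemma aux_quad_bound {n : ℕ} (D : Matrix (Fin n) (Fin n) ℂ) (ψ : Fin n → ℂ)
    (h : star ψ ⬝ᵥ ψ = 1) :
    |(star ψ ⬝ᵥ D.mulVec ψ).re| ≤ ∑ i, ∑ j, ‖D i j‖ := by
  calc |(star ψ ⬝ᵥ D.mulVec ψ).re| ≤ ‖star ψ ⬝ᵥ D.mulVec ψ‖ := Complex.abs_re_le_norm _
    _ ≤ ∑ i, ‖(star ψ) i * (D.mulVec ψ) i‖ := norm_sum_le _ _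
    _ ≤ ∑ i, ∑ j, ‖D i j‖ := by
        apply Finset.sum_le_sum
        intro i _
        calc ‖(star ψ) i * (D.mulVec ψ) i‖ ≤ 1 * ‖(D.mulVec ψ) i‖ := by
              rw [norm_mul]
              apply mul_le_mul_of_nonneg_right _ (norm_nonneg _)
              simpa using aux_entry ψ h i
          _ = ‖∑ j, D i j * ψ j‖ := by rw [one_mul]; rfl
          _ ≤ ∑ j, ‖D i j * ψ j‖ := norm_sum_le _ _
          _ ≤ ∑ j, ‖D i j‖ := by
              apply Finset.sum_le_sum
              intro j _
              rw [norm_mul]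
              nlinarith [aux_entry ψ h j, norm_nonneg (D i j), norm_nonneg (ψ j)]

lemma aux_val {n : ℕ} (H0 H1 : Matrix (Fin n) (Fin n) ℂ) (s : ℝ) (ψ : Fin n → ℂ) :
    (star ψ ⬝ᵥ ((1 - (s : ℂ)) • H0 + (s : ℂ) • H1).mulVec ψ).re
      = (1 - s) * (star ψ ⬝ᵥ H0.mulVec ψ).re + s * (star ψ ⬝ᵥ H1.mulVec ψ).re := by
  simp [Matrix.add_mulVec, Matrix.smul_mulVec, dotProduct_add, dotProduct_smul,
    smul_eq_mul, Complex.add_re, Complex.mul_re, Complex.sub_re, Complex.sub_im,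
    Complex.ofReal_re, Complex.ofReal_im]

lemma aux_cont {n : ℕ} (H0 H1 : Matrix (Fin n) (Fin n) ℂ) (C : (Fin n → ℂ) → Prop)
    (F : ℝ → ℝ)
    (hF : ∀ s : ℝ, F s = sInf {x : ℝ | ∃ ψ : Fin n → ℂ,
      star ψ ⬝ᵥ ψ = 1 ∧ C ψ ∧
        x = (star ψ ⬝ᵥ ((1 - (s : ℂ)) • H0 + (s : ℂ) • H1).mulVec ψ).re}) :
    Continuous F := by
  set A : (Fin n → ℂ) → ℝ := fun ψ => (star ψ ⬝ᵥ H0.mulVec ψ).re with hA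
  set B : (Fin n → ℂ) → ℝ := fun ψ => (star ψ ⬝ᵥ H1.mulVec ψ).re with hB
  set T : ℝ → Set ℝ := fun s => {x : ℝ | ∃ ψ : Fin n → ℂ,
      star ψ ⬝ᵥ ψ = 1 ∧ C ψ ∧
        x = (star ψ ⬝ᵥ ((1 - (s : ℂ)) • H0 + (s : ℂ) • H1).mulVec ψ).re} with hT
  set M : ℝ := ∑ i, ∑ j, ‖(H1 - H0) i j‖ with hM
  set KA : ℝ := ∑ i, ∑ j, ‖H0 i j‖ with hKA
  set KB : ℝ := ∑ i, ∑ j, ‖H1 i j‖ with hKB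
  have hM0 : 0 ≤ M := Finset.sum_nonneg fun i _ => Finset.sum_nonneg fun j _ => norm_nonneg _
  have hslope : ∀ ψ : Fin n → ℂ, star ψ ⬝ᵥ ψ = 1 → |B ψ - A ψ| ≤ M := by
    intro ψ hψ
    have hd : B ψ - A ψ = (star ψ ⬝ᵥ (H1 - H0).mulVec ψ).re := by
      simp [hA, hB, Matrix.sub_mulVec, dotProduct_sub, Complex.sub_re]
    rw [hd]; exact aux_quad_bound _ _ hψ
  by_cases hne : ∃ ψ : Fin n → ℂ, star ψ ⬝ᵥ ψ = 1 ∧ C ψ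
  · have hTne : ∀ s : ℝ, (T s).Nonempty := by
      intro s
      obtain ⟨ψ, hψ, hC⟩ := hne
      exact ⟨_, ψ, hψ, hC, rfl⟩
    have hbdd : ∀ s : ℝ, BddBelow (T s) := by
      intro s
      refine ⟨-(|1 - s| * KA + |s| * KB), ?_⟩
      rintro x ⟨ψ, hψ, hC, rfl⟩
      rw [aux_val]
      have h1 : |(1 - s) * A ψ| ≤ |1 - s| * KA := by
        rw [abs_mul]
        exact mul_le_mul_of_nonneg_left (aux_quad_bound H0 ψ hψ) (abs_nonneg _)
      have h2 : |s * B ψ| ≤ |s| * KB := by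
        rw [abs_mul]
        exact mul_le_mul_of_nonneg_left (aux_quad_bound H1 ψ hψ) (abs_nonneg _)
      have := neg_abs_le ((1 - s) * A ψ)
      have := neg_abs_le (s * B ψ)
      linarith
    have key : ∀ s t : ℝ, F s ≤ F t + M * |s - t| := by
      intro s t
      rw [hF s, hF t]
      have : sInf (T s) - M * |s - t| ≤ sInf (T t) := by
        apply le_csInf (hTne t)
        rintro x ⟨ψ, hψ, hC, rfl⟩
        have hxs : ((star ψ ⬝ᵥ ((1 - (s : ℂ)) • H0 + (s : ℂ) • H1).mulVec ψ).re) ∈ T s :=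
          ⟨ψ, hψ, hC, rfl⟩
        have hle := csInf_le (hbdd s) hxs
        have hdiff : (star ψ ⬝ᵥ ((1 - (s : ℂ)) • H0 + (s : ℂ) • H1).mulVec ψ).re
            - (star ψ ⬝ᵥ ((1 - (t : ℂ)) • H0 + (t : ℂ) • H1).mulVec ψ).re
            = (s - t) * (B ψ - A ψ) := by
          rw [aux_val, aux_val]; simp only [hA, hB]; ring
        have habs : |(s - t) * (B ψ - A ψ)| ≤ M * |s - t| := by
          rw [abs_mul, mul_comm]
          exact mul_le_mul_of_nonneg_right (hslope ψ hψ) (abs_nonneg _)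
        have := neg_abs_le ((s - t) * (B ψ - A ψ))
        have := le_abs_self ((s - t) * (B ψ - A ψ))
        linarith
      linarith
    have hlip : LipschitzWith (Real.toNNReal M) F := by
      apply LipschitzWith.of_dist_le_mul
      intro s t
      rw [Real.dist_eq, Real.dist_eq, Real.coe_toNNReal M hM0]
      have k1 := key s t
      have k2 := key t s
      rw [abs_sub_comm t s] at k2
      rw [abs_le]
      constructor <;> linarith
    exact hlip.continuous
  · have hzero : ∀ s : ℝ, F s = 0 := by
      intro s
      rw [hF s]
      have : T s = ∅ := by
        ext x
        simp only [hT, Set.mem_setOf_eq, Set.mem_empty_iff_false, iff_false]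
        rintro ⟨ψ, hψ, hC, -⟩
        exact hne ⟨ψ, hψ, hC⟩
      rw [show {x : ℝ | ∃ ψ : Fin n → ℂ, star ψ ⬝ᵥ ψ = 1 ∧ C ψ ∧
        x = (star ψ ⬝ᵥ ((1 - (s : ℂ)) • H0 + (s : ℂ) • H1).mulVec ψ).re} = T s from rfl, this]
      exact Real.sInf_empty
    have : F = fun _ => (0 : ℝ) := funext hzero
    rw [this]; exact continuous_const

/-- for the family `H_s = (1−s)H₀ + sH₁` of Hermitian operators commuting with a
unitary involution `P` (fermion parity), if the lowest energies `E₊(s), E₋(s)` of the two parity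
blocks satisfy `E₊(s) ≠ E₋(s)` for all `s ∈ [0,1]` (nonzero parity gap), then the ground state
parity (which block is lower) is constant on `[0,1]`. -/
theorem stmt16 {n : ℕ} (H0 H1 P : Matrix (Fin n) (Fin n) ℂ)
    (hH0 : H0.IsHermitian) (hH1 : H1.IsHermitian)
    (hPunit : P * Pᴴ = 1) (hPinv : P * P = 1)
    (hPH0 : P * H0 = H0 * P) (hPH1 : P * H1 = H1 * P)
    (Hs : ℝ → Matrix (Fin n) (Fin n) ℂ)
    (hHs : ∀ s : ℝ, Hs s = (1 - (s : ℂ)) • H0 + (s : ℂ) • H1)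
    (Ep Em : ℝ → ℝ)
    (hEp : ∀ s : ℝ, Ep s = sInf {x : ℝ | ∃ ψ : Fin n → ℂ,
      star ψ ⬝ᵥ ψ = 1 ∧ P.mulVec ψ = ψ ∧ x = (star ψ ⬝ᵥ (Hs s).mulVec ψ).re})
    (hEm : ∀ s : ℝ, Em s = sInf {x : ℝ | ∃ ψ : Fin n → ℂ,
      star ψ ⬝ᵥ ψ = 1 ∧ P.mulVec ψ = -ψ ∧ x = (star ψ ⬝ᵥ (Hs s).mulVec ψ).re})
    (hgap : ∀ s ∈ Set.Icc (0 : ℝ) 1, Ep s ≠ Em s) :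
    ∀ s ∈ Set.Icc (0 : ℝ) 1, ∀ t ∈ Set.Icc (0 : ℝ) 1, (Ep s < Em s ↔ Ep t < Em t) := by
  have hEpc : Continuous Ep := by
    apply aux_cont H0 H1 (fun ψ => P.mulVec ψ = ψ) Ep
    intro s; rw [hEp s]; simp only [hHs]
  have hEmc : Continuous Em := by
    apply aux_cont H0 H1 (fun ψ => P.mulVec ψ = -ψ) Em
    intro s; rw [hEm s]; simp only [hHs]
  have hg : Continuous (fun u => Ep u - Em u) := hEpc.sub hEmc
  have main : ∀ s ∈ Set.Icc (0 : ℝ) 1, ∀ t ∈ Set.Icc (0 : ℝ) 1,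
      Ep s < Em s → Ep t < Em t := by
    intro s hs t ht hst
    by_contra hnot
    have htgt : Em t < Ep t := lt_of_le_of_ne (not_lt.mp hnot) (Ne.symm (hgap t ht))
    have hsub : Set.uIcc ((fun u => Ep u - Em u) s) ((fun u => Ep u - Em u) t)
        ⊆ (fun u => Ep u - Em u) '' Set.uIcc s t :=
      intermediate_value_uIcc hg.continuousOn
    have h0 : (0 : ℝ) ∈ Set.uIcc (Ep s - Em s) (Ep t - Em t) := by
      rw [Set.mem_uIcc]
      left
      constructor <;> [linarith; linarith]
    obtain ⟨u, hu, hgu⟩ := hsub h0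
    have huIcc : u ∈ Set.Icc (0 : ℝ) 1 := by
      rw [Set.mem_uIcc] at hu
      obtain ⟨hs0, hs1⟩ := hs
      obtain ⟨ht0, ht1⟩ := ht
      rcases hu with ⟨h1, h2⟩ | ⟨h1, h2⟩ <;> exact ⟨by linarith, by linarith⟩
    exact hgap u huIcc (by simpa [sub_eq_zero] using hgu)
  intro s hs t ht
  constructor
  · exact main s hs t ht
  · exact main t ht s hs
end
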